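/- Let η > 0 and β ∈ (0, 1) be such that b := β(1+η) < 1, and let C₃, C₄ > 0. If P : [1, T] → ℝ is continuous, nonnegative and satisfies P(t) ≥ C₃ + C₄ ∫₁ᵗ P(s)^{1+η} s^{−b} ds for all t ∈ [1, T], then T < t₀, where t₀ is defined by t₀^{1−b} = 1 + (1−b) C₃^{−η}/(η C₄). In particular, no continuous nonnegative P can satisfy this inequality on all of [1, ∞). -/

import Mathlib

open MeasureTheory Set intervalIntegral

/-- weighted renewal-inequality blow-up, key step of Theorem 1.9.
Let `η > 0`, `β ∈ (0,1)` with `b := β(1+η) < 1`, and `C₃, C₄ > 0`.  If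
`P : [1, T] → ℝ` is continuous, nonnegative and satisfies
`P t ≥ C₃ + C₄ ∫₁ᵗ P(s)^(1+η) s^(-b) ds` for all `t ∈ [1, T]`, then `T < t₀`,
where `t₀^(1-b) = 1 + (1-b) C₃^(-η)/(η C₄)`.  In particular, no continuous
nonnegative `P` can satisfy this inequality on all of `[1, ∞)`. -/
theorem weighted_renewal_blowup_time_bound
    (η β C₃ C₄ T : ℝ) (hη : 0 < η) (hβ : β ∈ Set.Ioo (0 : ℝ) 1)
    (hb : β * (1 + η) < 1) (hC₃ : 0 < C₃) (hC₄ : 0 < C₄) (hT : 1 ≤ T)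
    (P : ℝ → ℝ)
    (hcont : ContinuousOn P (Set.Icc 1 T))
    (hnn : ∀ t ∈ Set.Icc (1 : ℝ) T, 0 ≤ P t)
    (hineq : ∀ t ∈ Set.Icc (1 : ℝ) T,
      C₃ + C₄ * ∫ s in (1 : ℝ)..t, P s ^ (1 + η) * s ^ (-(β * (1 + η))) ≤ P t) :
    T < (1 + (1 - β * (1 + η)) * C₃ ^ (-η) / (η * C₄)) ^ (1 / (1 - β * (1 + η))) := by
  set b : ℝ := β * (1 + η) with hbdef
  have hη1 : (0 : ℝ) < 1 + η := by linarith
  have hb0 : 0 < b := mul_pos hβ.1 hη1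
  have h1b : 0 < 1 - b := by linarith
  set g : ℝ → ℝ := fun s => P s ^ (1 + η) * s ^ (-b) with hgdef
  -- continuity of the integrand on [1, T]
  have hgc : ContinuousOn g (Set.Icc 1 T) := by
    apply ContinuousOn.mul
    · exact hcont.rpow_const (fun x hx => Or.inr (by positivity))
    · exact continuousOn_id.rpow_const
        (fun x hx => Or.inl (by have := hx.1; simp only [id]; positivity))
  have hgnn : ∀ s ∈ Set.Icc (1 : ℝ) T, 0 ≤ g s := by
    intro s hs
    have hs0 : (0 : ℝ) < s := lt_of_lt_of_le one_pos hs.1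
    exact mul_nonneg (Real.rpow_nonneg (hnn s hs) _) (Real.rpow_nonneg hs0.le _)
  -- integrability
  have hgint : ∀ t ∈ Set.Icc (1 : ℝ) T, IntervalIntegrable g volume 1 t := by
    intro t ht
    apply ContinuousOn.intervalIntegrable
    apply hgc.mono
    rw [Set.uIcc_of_le ht.1]
    exact Set.Icc_subset_Icc le_rfl ht.2
  set F : ℝ → ℝ := fun t => C₃ + C₄ * ∫ s in (1 : ℝ)..t, g s with hFdef
  have hFge : ∀ t ∈ Set.Icc (1 : ℝ) T, C₃ ≤ F t := by
    intro t ht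
    have : 0 ≤ ∫ s in (1 : ℝ)..t, g s := by
      apply intervalIntegral.integral_nonneg ht.1
      intro s hs
      exact hgnn s ⟨hs.1, le_trans hs.2 ht.2⟩
    have h := mul_nonneg hC₄.le this
    simp only [hFdef]
    linarith
  have hFpos : ∀ t ∈ Set.Icc (1 : ℝ) T, 0 < F t := fun t ht => lt_of_lt_of_le hC₃ (hFge t ht)
  have hPF : ∀ t ∈ Set.Icc (1 : ℝ) T, F t ≤ P t := hineq
  -- continuity of F
  have hFcont : ContinuousOn F (Set.Icc 1 T) := by
    apply continuousOn_const.add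
    apply continuousOn_const.mul
    have := intervalIntegral.continuousOn_primitive_interval
      (f := g) (μ := volume) (a := (1 : ℝ)) (b := T)
      (by rw [Set.uIcc_of_le hT]; exact (hgc.mono le_rfl).integrableOn_compact isCompact_Icc)
    rwa [Set.uIcc_of_le hT] at this
  -- the comparison function G
  set G : ℝ → ℝ := fun t => F t ^ (-η) + η * C₄ / (1 - b) * (t ^ (1 - b) - 1) with hGdef
  have hGcont : ContinuousOn G (Set.Icc 1 T) := by
    apply ContinuousOn.add
    · exact hFcont.rpow_const (fun x hx => Or.inl (ne_of_gt (hFpos x hx)))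
    · apply continuousOn_const.mul
      apply ContinuousOn.sub _ continuousOn_const
      exact continuousOn_id.rpow_const
        (fun x hx => Or.inl (by have := hx.1; simp only [id]; positivity))
  -- derivative of G at interior points, and nonpositivity
  have hderiv : ∀ t ∈ Set.Ioo (1 : ℝ) T,
      HasDerivAt G (-η * F t ^ (-η - 1) * (C₄ * g t) + η * C₄ / (1 - b) * ((1 - b) * t ^ (-b))) t := by
    intro t ht
    have htmem : t ∈ Set.Icc (1 : ℝ) T := Set.Ioo_subset_Icc_self ht
    have ht0 : (0 : ℝ) < t := lt_trans one_pos ht.1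
    have hFt : HasDerivAt (fun u => ∫ s in (1 : ℝ)..u, g s) (g t) t := by
      apply intervalIntegral.integral_hasDerivAt_right (hgint t htmem)
      · exact ⟨Set.Ioo 1 T, Ioo_mem_nhds ht.1 ht.2,
          (hgc.mono Set.Ioo_subset_Icc_self).aestronglyMeasurable measurableSet_Ioo⟩
      · exact hgc.continuousAt (Icc_mem_nhds ht.1 ht.2)
    have hF' : HasDerivAt F (C₄ * g t) t := (hFt.const_mul C₄).const_add C₃
    have h1 : HasDerivAt (fun u => F u ^ (-η)) (-η * F t ^ (-η - 1) * (C₄ * g t)) t := by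
      have := hF'.rpow_const (p := -η) (Or.inl (ne_of_gt (hFpos t htmem)))
      convert this using 1
      ring
    have h2 : HasDerivAt (fun u : ℝ => u ^ (1 - b)) ((1 - b) * t ^ (-b)) t := by
      have := Real.hasDerivAt_rpow_const (x := t) (p := 1 - b) (Or.inl (ne_of_gt ht0))
      convert this using 2
      ring
    exact h1.add (((h2.sub_const 1).const_mul (η * C₄ / (1 - b))))
  have hderiv_nonpos : ∀ t ∈ Set.Ioo (1 : ℝ) T, deriv G t ≤ 0 := by
    intro t ht
    have htmem : t ∈ Set.Icc (1 : ℝ) T := Set.Ioo_subset_Icc_self ht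
    have ht0 : (0 : ℝ) < t := lt_trans one_pos ht.1
    rw [(hderiv t ht).deriv]
    have hFt0 : 0 < F t := hFpos t htmem
    -- key: F t ^ (-η-1) * P t ^ (1+η) ≥ 1
    have hkey : 1 ≤ F t ^ (-η - 1) * P t ^ (1 + η) := by
      have h1 : F t ^ (1 + η) ≤ P t ^ (1 + η) :=
        Real.rpow_le_rpow hFt0.le (hPF t htmem) hη1.le
      have h2 : F t ^ (-η - 1) * F t ^ (1 + η) = 1 := by
        rw [← Real.rpow_add hFt0, show -η - 1 + (1 + η) = 0 by ring, Real.rpow_zero]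
      calc (1 : ℝ) = F t ^ (-η - 1) * F t ^ (1 + η) := h2.symm
        _ ≤ F t ^ (-η - 1) * P t ^ (1 + η) :=
            mul_le_mul_of_nonneg_left h1 (Real.rpow_nonneg hFt0.le _)
    have htb : (0 : ℝ) < t ^ (-b) := Real.rpow_pos_of_pos ht0 _
    have hηC₄ : (0 : ℝ) < η * C₄ := mul_pos hη hC₄
    have hsimp : η * C₄ / (1 - b) * ((1 - b) * t ^ (-b)) = η * C₄ * t ^ (-b) := by
      field_simp
    rw [hsimp]
    have : η * C₄ * t ^ (-b) * 1 ≤ η * C₄ * t ^ (-b) * (F t ^ (-η - 1) * P t ^ (1 + η)) :=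
      mul_le_mul_of_nonneg_left hkey (by positivity)
    have hgexp : g t = P t ^ (1 + η) * t ^ (-b) := rfl
    rw [hgexp]
    nlinarith [this]
  -- G is antitone
  have hanti : AntitoneOn G (Set.Icc 1 T) := by
    apply antitoneOn_of_deriv_nonpos (convex_Icc 1 T) hGcont
    · intro x hx
      rw [interior_Icc] at hx
      exact ((hderiv x hx).differentiableAt).differentiableWithinAt
    · intro x hx
      rw [interior_Icc] at hx
      exact hderiv_nonpos x hx
  have hG1 : G 1 = C₃ ^ (-η) := by
    simp only [hGdef, hFdef]
    rw [intervalIntegral.integral_same, Real.one_rpow]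
    ring
  have hGT : G T ≤ G 1 := hanti (Set.left_mem_Icc.mpr hT) ⟨hT, le_rfl⟩ hT
  -- unfold and finish with algebra
  have hFT : 0 < F T := hFpos T ⟨hT, le_rfl⟩
  have hFTη : 0 < F T ^ (-η) := Real.rpow_pos_of_pos hFT _
  have hGTval : F T ^ (-η) + η * C₄ / (1 - b) * (T ^ (1 - b) - 1) ≤ C₃ ^ (-η) := by
    rw [← hG1]; exact hGT
  have hηC₄ : (0 : ℝ) < η * C₄ := mul_pos hη hC₄
  have hTb : T ^ (1 - b) < 1 + (1 - b) * C₃ ^ (-η) / (η * C₄) := by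
    have h1 : η * C₄ / (1 - b) * (T ^ (1 - b) - 1) < C₃ ^ (-η) := by linarith
    rw [div_mul_eq_mul_div, div_lt_iff₀ h1b] at h1
    have h3 : T ^ (1 - b) - 1 < (1 - b) * C₃ ^ (-η) / (η * C₄) := by
      rw [lt_div_iff₀ hηC₄]
      nlinarith
    linarith
  have hT0 : (0 : ℝ) < T := lt_of_lt_of_le one_pos hT
  have hTid : T = (T ^ (1 - b)) ^ (1 / (1 - b)) := by
    rw [← Real.rpow_mul hT0.le, mul_one_div, div_self h1b.ne', Real.rpow_one]
  calc T = (T ^ (1 - b)) ^ (1 / (1 - b)) := hTid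
    _ < (1 + (1 - b) * C₃ ^ (-η) / (η * C₄)) ^ (1 / (1 - b)) :=
        Real.rpow_lt_rpow (Real.rpow_nonneg hT0.le _) hTb (by positivity)
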